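/- The quotient Lie superalgebra 𝔞_0/𝔞_1 is isomorphic to 𝔤̂ = ℂd ⋉ 𝔤, where [d, x] = d(x) for x ∈ 𝔤. -/

import Mathlib

/-!
STATEMENT 5: The quotient Lie algebra `𝔞_0/𝔞_1` is isomorphic to
`𝔤̂ = ℂd ⋉ 𝔤`, where `[d, x] = d(x)` (`d` is the diagonalizable derivation,
`d(x_s) = β_s x_s`).

Abstract faithful model: `L` realizes `𝔏 = W ⋉ (𝔤 ⊗ ℂ[t,t⁻¹])`, with the
elements `d i`, `x s j` linearly independent (as they are in `𝔏`) and
satisfying the defining brackets; `G` realizes `𝔤̂` via a basis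
`{D} ∪ {X s}` with `[D, X_s] = β_s X_s` and the structure constants `c` of
`𝔤`.  The isomorphism `𝔞_0/𝔞_1 ≅ 𝔤̂` is expressed by a linear map
`φ : L → G` which on `𝔞_0` is bracket-preserving, surjective onto `G`, and
has kernel exactly `𝔞_1`.
-/

variable {L : Type*} [LieRing L] [LieAlgebra ℂ L] {S : Type*}

/-- `(t-1)^k d_i`, expanded in the basis `{d_n}`. -/
noncomputable def td (d : ℤ → L) (k : ℕ) (i : ℤ) : L :=
  ∑ r ∈ Finset.range (k + 1), ((-1 : ℂ) ^ (k - r) * (k.choose r : ℂ)) • d (i + r)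

/-- `(t-1)^k x_s(j)`, expanded in the basis `{x_s(n)}`. -/
noncomputable def tx (x : S → ℤ → L) (k : ℕ) (s : S) (j : ℤ) : L :=
  ∑ r ∈ Finset.range (k + 1), ((-1 : ℂ) ^ (k - r) * (k.choose r : ℂ)) • x s (j + r)

/-- The subspace `𝔞_k = (t-1)^{k+1} W ⋉ (𝔤 ⊗ (t-1)^k ℂ[t,t⁻¹])`. -/
noncomputable def aSub (d : ℤ → L) (x : S → ℤ → L) (k : ℕ) : Submodule ℂ L :=
  Submodule.span ℂ
    ((Set.range fun i : ℤ => td d (k + 1) i) ∪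
      (Set.range fun p : S × ℤ => tx x k p.1 p.2))

lemma td_one (d : ℤ → L) (i : ℤ) : td d 1 i = d (i + 1) - d i := by
  simp [td, Finset.sum_range_succ]
  module

lemma tx_zero (x : S → ℤ → L) (s : S) (j : ℤ) : tx x 0 s j = x s j := by
  simp [tx]

lemma tx_one (x : S → ℤ → L) (s : S) (j : ℤ) : tx x 1 s j = x s (j + 1) - x s j := by
  simp [tx, Finset.sum_range_succ]
  module

lemma td_two (d : ℤ → L) (i : ℤ) : td d 2 i = td d 1 (i + 1) - td d 1 i := by
  rw [td_one, td_one, show i + 1 + 1 = i + 2 by ring]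
  norm_num [td, Finset.sum_range_succ]
  module

lemma tx_one' (x : S → ℤ → L) (s : S) (j : ℤ) :
    tx x 1 s j = tx x 0 s (j + 1) - tx x 0 s j := by
  rw [tx_one, tx_zero, tx_zero]

theorem quotient_a0_a1_iso_ghat (d : ℤ → L) (x : S → ℤ → L) (β : S → ℂ)
    (c : S → S → (S →₀ ℂ))
    (hd : ∀ m n : ℤ, ⁅d m, d n⁆ = ((n : ℂ) - (m : ℂ)) • d (m + n))
    (hdx : ∀ (i : ℤ) (s : S) (k : ℤ),
      ⁅d i, x s k⁆ = ((k : ℂ) + (i : ℂ) * β s) • x s (i + k))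
    (hxx : ∀ (s p : S) (j k : ℤ),
      ⁅x s j, x p k⁆ = (c s p).sum fun q a => a • x q (j + k))
    (hli : LinearIndependent ℂ (Sum.elim d fun p : S × ℤ => x p.1 p.2))
    -- 𝔤̂ = ℂd ⋉ 𝔤, with basis D, X_s:
    (G : Type*) [LieRing G] [LieAlgebra ℂ G] (D : G) (X : S → G)
    (hDX : ∀ s, ⁅D, X s⁆ = β s • X s)
    (hXX : ∀ s p, ⁅X s, X p⁆ = (c s p).sum fun q a => a • X q)
    (hspan : Submodule.span ℂ ({D} ∪ Set.range X) = ⊤)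
    (hbasis : LinearIndependent ℂ (fun o : Option S => o.elim D X)) :
    ∃ φ : L →ₗ[ℂ] G,
      (∀ u ∈ aSub d x 0, ∀ v ∈ aSub d x 0, φ ⁅u, v⁆ = ⁅φ u, φ v⁆) ∧
        Submodule.map φ (aSub d x 0) = ⊤ ∧
          ∀ v ∈ aSub d x 0, (φ v = 0 ↔ v ∈ aSub d x 1) := by
  classical
  set p : Submodule ℂ L :=
    Submodule.span ℂ (Set.range (Sum.elim d fun q : S × ℤ => x q.1 q.2)) with hp
  let b : Module.Basis (ℤ ⊕ S × ℤ) ℂ p := Module.Basis.span hli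
  obtain ⟨g, hg⟩ := p.subtype.exists_leftInverse_of_injective p.ker_subtype
  have hgid : ∀ m : p, g (m : L) = m := by
    intro m
    have := LinearMap.congr_fun hg m
    simpa using this
  set φ : L →ₗ[ℂ] G :=
    (b.constr ℂ (Sum.elim (fun i : ℤ => (i : ℂ) • D) fun q : S × ℤ => X q.1)).comp g with hφ
  have φd : ∀ i : ℤ, φ (d i) = (i : ℂ) • D := by
    intro i
    have h1 : d i = ((Module.Basis.span hli (Sum.inl i) : p) : L) :=
      congrArg Subtype.val (Module.Basis.span_apply hli (Sum.inl i)).symm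
    rw [hφ, LinearMap.comp_apply, h1, hgid, Module.Basis.constr_basis]; rfl
  have φx : ∀ (s : S) (j : ℤ), φ (x s j) = X s := by
    intro s j
    have h1 : x s j = ((Module.Basis.span hli (Sum.inr (s, j)) : p) : L) :=
      congrArg Subtype.val (Module.Basis.span_apply hli (Sum.inr (s, j))).symm
    rw [hφ, LinearMap.comp_apply, h1, hgid, Module.Basis.constr_basis]; rfl
  have φtd1 : ∀ i : ℤ, φ (td d 1 i) = D := by
    intro i
    rw [td_one, map_sub, φd, φd]
    push_cast
    module
  have φtd2 : ∀ i : ℤ, φ (td d 2 i) = 0 := by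
    intro i
    rw [td_two, map_sub, φtd1, φtd1, sub_self]
  have φtx1 : ∀ (s : S) (j : ℤ), φ (tx x 1 s j) = 0 := by
    intro s j
    rw [tx_one, map_sub, φx, φx, sub_self]
  -- membership of the generators
  have htd1mem : ∀ i : ℤ, td d 1 i ∈ aSub d x 0 := fun i =>
    Submodule.subset_span (Or.inl ⟨i, rfl⟩)
  have hxmem : ∀ (s : S) (j : ℤ), x s j ∈ aSub d x 0 := by
    intro s j
    have : tx x 0 s j ∈ aSub d x 0 := Submodule.subset_span (Or.inr ⟨(s, j), rfl⟩)
    rwa [tx_zero] at this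
  have htd2mem : ∀ i : ℤ, td d 2 i ∈ aSub d x 1 := fun i =>
    Submodule.subset_span (Or.inl ⟨i, rfl⟩)
  have htx1mem : ∀ (s : S) (j : ℤ), tx x 1 s j ∈ aSub d x 1 := fun s j =>
    Submodule.subset_span (Or.inr ⟨(s, j), rfl⟩)
  -- 𝔞₁ is in the kernel of φ
  have hA1ker : aSub d x 1 ≤ LinearMap.ker φ := by
    rw [aSub, Submodule.span_le]
    rintro _ (⟨i, rfl⟩ | ⟨⟨s, j⟩, rfl⟩)
    · exact LinearMap.mem_ker.2 (φtd2 i)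
    · exact LinearMap.mem_ker.2 (φtx1 s j)
  -- bracket computations
  have hdd : ∀ i j : ℤ, φ ⁅td d 1 i, td d 1 j⁆ = 0 := by
    intro i j
    rw [td_one, td_one]
    simp only [sub_lie, lie_sub, hd, map_sub, map_smul, φd]
    push_cast
    module
  have hmix : ∀ (i : ℤ) (s : S) (k : ℤ), φ ⁅td d 1 i, x s k⁆ = β s • X s := by
    intro i s k
    rw [td_one]
    simp only [sub_lie, hdx, map_sub, map_smul, φx]
    push_cast
    module
  have hxxφ : ∀ (s q : S) (j k : ℤ), φ ⁅x s j, x q k⁆ = ⁅X s, X q⁆ := by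
    intro s q j k
    rw [hxx, map_finsuppSum, hXX]
    refine Finsupp.sum_congr ?_
    intro o _
    rw [map_smul, φx]
  refine ⟨φ, ?_, ?_, ?_⟩
  · -- bracket-preserving on 𝔞₀
    intro u hu v hv
    induction hu, hv using Submodule.span_induction₂ with
    | mem_mem u v hu hv =>
      rcases hu with ⟨i, rfl⟩ | ⟨⟨s, j⟩, rfl⟩ <;>
        rcases hv with ⟨i', rfl⟩ | ⟨⟨s', j'⟩, rfl⟩
      · show φ ⁅td d 1 i, td d 1 i'⁆ = ⁅φ (td d 1 i), φ (td d 1 i')⁆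
        rw [hdd, φtd1, φtd1, lie_self]
      · show φ ⁅td d 1 i, tx x 0 s' j'⁆ = ⁅φ (td d 1 i), φ (tx x 0 s' j')⁆
        rw [tx_zero, hmix, φtd1, φx, hDX]
      · show φ ⁅tx x 0 s j, td d 1 i'⁆ = ⁅φ (tx x 0 s j), φ (td d 1 i')⁆
        rw [tx_zero, ← lie_skew, map_neg, hmix, φx, φtd1, ← lie_skew (X s) D, hDX]
      · show φ ⁅tx x 0 s j, tx x 0 s' j'⁆ = ⁅φ (tx x 0 s j), φ (tx x 0 s' j')⁆
        rw [tx_zero, tx_zero, hxxφ, φx, φx]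
    | zero_left v hv => simp
    | zero_right u hu => simp
    | add_left u₁ u₂ v h₁ h₂ hv ih₁ ih₂ => simp [add_lie, ih₁, ih₂]
    | add_right u v₁ v₂ hu h₁ h₂ ih₁ ih₂ => simp [lie_add, ih₁, ih₂]
    | smul_left a u v hu hv ih => simp [smul_lie, ih]
    | smul_right a u v hu hv ih => simp [lie_smul, ih]
  · -- surjectivity onto G
    apply top_unique
    rw [← hspan, Submodule.span_le]
    rintro y (hy | ⟨s, rfl⟩)
    · rw [Set.mem_singleton_iff] at hy
      subst hy
      exact ⟨td d 1 0, htd1mem 0, φtd1 0⟩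
    · exact ⟨x s 0, hxmem s 0, φx s 0⟩
  · -- kernel is exactly 𝔞₁
    -- difference lemmas
    have hdiff_d : ∀ i : ℤ, td d 1 i - td d 1 0 ∈ aSub d x 1 := by
      intro i
      induction i using Int.induction_on with
      | zero => simpa using (aSub d x 1).zero_mem
      | succ n ih =>
        have h : td d 1 ((n : ℤ) + 1) - td d 1 0
            = (td d 1 (n : ℤ) - td d 1 0) + td d 2 (n : ℤ) := by
          rw [td_two]; abel
        rw [h]
        exact add_mem ih (htd2mem _)
      | pred n ih =>
        have h2 := td_two d (-(n : ℤ) - 1)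
        rw [show -(n : ℤ) - 1 + 1 = -(n : ℤ) by ring] at h2
        have h : td d 1 (-(n : ℤ) - 1) - td d 1 0
            = (td d 1 (-(n : ℤ)) - td d 1 0) - td d 2 (-(n : ℤ) - 1) := by
          rw [h2]; abel
        rw [h]
        exact sub_mem ih (htd2mem _)
    have hdiff_x : ∀ (s : S) (j : ℤ), x s j - x s 0 ∈ aSub d x 1 := by
      intro s j
      induction j using Int.induction_on with
      | zero => simpa using (aSub d x 1).zero_mem
      | succ n ih =>
        have h : x s ((n : ℤ) + 1) - x s 0 = (x s (n : ℤ) - x s 0) + tx x 1 s (n : ℤ) := by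
          rw [tx_one]; abel
        rw [h]
        exact add_mem ih (htx1mem _ _)
      | pred n ih =>
        have h2 := tx_one x s (-(n : ℤ) - 1)
        rw [show -(n : ℤ) - 1 + 1 = -(n : ℤ) by ring] at h2
        have h : x s (-(n : ℤ) - 1) - x s 0
            = (x s (-(n : ℤ)) - x s 0) - tx x 1 s (-(n : ℤ) - 1) := by
          rw [h2]; abel
        rw [h]
        exact sub_mem ih (htx1mem _ _)
    set w : Option S → L := fun o => o.elim (td d 1 0) fun s => x s 0 with hw
    have hsplit : aSub d x 0 ≤ aSub d x 1 ⊔ Submodule.span ℂ (Set.range w) := by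
      rw [aSub, Submodule.span_le]
      rintro _ (⟨i, rfl⟩ | ⟨⟨s, j⟩, rfl⟩)
      · show td d (0 + 1) i ∈ _
        have h : td d (0 + 1) i = (td d 1 i - td d 1 0) + w none := by
          simp [hw]
        rw [h]
        exact add_mem (Submodule.mem_sup_left (hdiff_d i))
          (Submodule.mem_sup_right (Submodule.subset_span ⟨none, rfl⟩))
      · show tx x 0 s j ∈ _
        have h : tx x 0 s j = (x s j - x s 0) + w (some s) := by
          rw [tx_zero]; simp [hw]
        rw [h]
        exact add_mem (Submodule.mem_sup_left (hdiff_x s j))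
          (Submodule.mem_sup_right (Submodule.subset_span ⟨some s, rfl⟩))
    intro v hv
    constructor
    · intro hφv
      obtain ⟨a, ha, u, hu, rfl⟩ := Submodule.mem_sup.1 (hsplit hv)
      have hφa : φ a = 0 := hA1ker ha
      have hφu : φ u = 0 := by
        rw [map_add, hφa, zero_add] at hφv
        exact hφv
      obtain ⟨l, hl⟩ := Finsupp.mem_span_range_iff_exists_finsupp.1 hu
      have hcomb : Finsupp.linearCombination ℂ (fun o : Option S => o.elim D X) l = 0 := by
        rw [Finsupp.linearCombination_apply]
        have h : φ u = l.sum fun o a => a • (o.elim D X) := by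
          rw [← hl, map_finsuppSum]
          refine Finsupp.sum_congr ?_
          intro o _
          rcases o with _ | s
          · simp [hw, φtd1]
          · simp [hw, φx]
        rw [← h, hφu]
      have hl0 : l = 0 := linearIndependent_iff.1 hbasis l hcomb
      have hu0 : u = 0 := by rw [← hl, hl0]; simp
      rw [hu0, add_zero]
      exact ha
    · intro h
      exact LinearMap.mem_ker.1 (hA1ker h)
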